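/- arXiv:2101.00507 — 3 statements merged into one kernel-verified Lean document; each statement's English description precedes it below -/
import Mathlib

section
/- For all integers n ≥ s ≥ 4, the join of the complete graph K_{s−2} with an independent set on n−s+2 vertices is a K_s-saturated graph on n vertices containing exactly (s−2)·C(n−1,2) + (n−s+2)·C(s−2,2) copies of K_{1,2}. -/
open SimpleGraph

/-- `G.Contains F` means `G` has a subgraph isomorphic to `F`,
i.e. there is an injective graph homomorphism from `F` to `G`. -/
def SimpleGraph.Contains {V : Type*} {W : Type*} (G : SimpleGraph V) (F : SimpleGraph W) : Prop :=
  ∃ f : F →g G, Function.Injective f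

/-- `G.Saturated F` : `G` is `F`-saturated, i.e. `G` contains no copy of `F`, but adding the
edge joining any pair of distinct nonadjacent vertices creates a copy of `F`. -/
def SimpleGraph.Saturated {V : Type*} {W : Type*} (G : SimpleGraph V) (F : SimpleGraph W) :
    Prop :=
  ¬ G.Contains F ∧
    ∀ u v : V, u ≠ v → ¬ G.Adj u v → (G ⊔ SimpleGraph.fromEdgeSet {s(u, v)}).Contains F

/-- The number of copies of `H` in `G`, i.e. the number of subgraphs of `G`
isomorphic to `H`. -/
noncomputable def SimpleGraph.copies {V : Type*} {W : Type*} (G : SimpleGraph V)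
    (H : SimpleGraph W) : ℕ :=
  {G' : G.Subgraph | Nonempty (G'.coe ≃g H)}.ncard

/-- The join of the complete graph on `Fin k` with an independent set on `Fin m`:
two vertices are adjacent iff they are distinct and at least one of them lies in the left
(complete) part. This is `K_k + \overline{K_m}`. -/
def joinCompleteIndep (k m : ℕ) : SimpleGraph (Fin k ⊕ Fin m) :=
  SimpleGraph.fromRel (fun x _ => x.isLeft)


section Aux
open Finset
set_option linter.unusedSectionVars false
set_option linter.unreachableTactic false
set_option linter.unusedTactic false
set_option linter.unusedVariables false

variable {V : Type*} [DecidableEq V] (G : SimpleGraph V)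

def pathSub (v : V) (e : Finset V) : G.Subgraph where
  verts := insert v ↑e
  Adj x y := (x = v ∧ y ∈ e ∧ G.Adj x y) ∨ (y = v ∧ x ∈ e ∧ G.Adj x y)
  adj_sub h := by rcases h with ⟨_, _, h⟩ | ⟨_, _, h⟩ <;> exact h
  edge_vert h := by rcases h with ⟨rfl, _, _⟩ | ⟨_, h, _⟩ <;> simp [*]
  symm := ⟨fun x y h => by
    rcases h with ⟨h1, h2, h3⟩ | ⟨h1, h2, h3⟩
    · exact Or.inr ⟨h1, h2, h3.symm⟩
    · exact Or.inl ⟨h1, h2, h3.symm⟩⟩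

lemma pathSub_verts (v : V) (e : Finset V) : (pathSub G v e).verts = insert v ↑e := rfl

lemma pathSub_adj (v : V) (e : Finset V) (x y : V) :
    (pathSub G v e).Adj x y ↔ (x = v ∧ y ∈ e ∧ G.Adj x y) ∨ (y = v ∧ x ∈ e ∧ G.Adj x y) :=
  Iff.rfl

lemma pathSub_iso (v a b : V) (hab : a ≠ b) (ha : G.Adj v a) (hb : G.Adj v b) :
    Nonempty ((pathSub G v {a, b}).coe ≃g completeBipartiteGraph (Fin 1) (Fin 2)) := by
  have hva : v ≠ a := ha.ne
  have hvb : v ≠ b := hb.ne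
  have hmem : ∀ x : V, x ∈ (pathSub G v {a, b}).verts ↔ (x = v ∨ x = a ∨ x = b) := by
    intro x; simp [pathSub_verts]
  refine ⟨⟨⟨fun x => if x.1 = v then Sum.inl 0 else if x.1 = a then Sum.inr 0 else Sum.inr 1,
      fun y => Sum.elim (fun _ => ⟨v, by simp [hmem]⟩)
        (fun i => if i = 0 then ⟨a, by simp [hmem]⟩ else ⟨b, by simp [hmem]⟩) y, ?_, ?_⟩, ?_⟩⟩
  · rintro ⟨x, hx⟩
    rcases (hmem x).1 hx with rfl | rfl | rfl
    · simp
    · simp [hva.symm]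
    · simp [hvb.symm, hab.symm]
  · rintro (⟨i⟩ | j)
    · simp [Fin.fin_one_eq_zero]
    · fin_cases j
      · simp [hva.symm]
      · simp [hvb.symm, hab.symm]
  · rintro ⟨x, hx⟩ ⟨y, hy⟩
    rcases (hmem x).1 hx with rfl | rfl | rfl <;> rcases (hmem y).1 hy with rfl | rfl | rfl <;>
      simp_all [pathSub_adj, Subgraph.coe_adj, hva.symm, hvb.symm, hab, hab.symm, ha, hb,
        ha.symm, hb.symm, G.irrefl]

lemma iso_pathSub [Fintype V] [DecidableRel G.Adj] (G' : G.Subgraph)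
    (h : Nonempty (G'.coe ≃g completeBipartiteGraph (Fin 1) (Fin 2))) :
    ∃ v : V, ∃ e : Finset V, e ∈ (G.neighborFinset v).powersetCard 2 ∧ G' = pathSub G v e := by
  classical
  obtain ⟨φ⟩ := h
  set c : G'.verts := φ.symm (Sum.inl 0) with hc
  set a : G'.verts := φ.symm (Sum.inr 0) with ha
  set b : G'.verts := φ.symm (Sum.inr 1) with hb
  have hinj : Function.Injective φ.symm := φ.symm.injective
  have hca : c ≠ a := fun h => by simpa using hinj h
  have hcb : c ≠ b := fun h => by simpa using hinj h
  have hab : a ≠ b := fun h => by simpa [Fin.ext_iff] using hinj h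
  have hca' : c.1 ≠ a.1 := fun h => hca (Subtype.ext h)
  have hcb' : c.1 ≠ b.1 := fun h => hcb (Subtype.ext h)
  have hab' : a.1 ≠ b.1 := fun h => hab (Subtype.ext h)
  have hadj_ca : G'.Adj c.1 a.1 := by
    have := (φ.symm.map_adj_iff (v := Sum.inl 0) (w := Sum.inr 0)).2 (by simp)
    simpa using this
  have hadj_cb : G'.Adj c.1 b.1 := by
    have := (φ.symm.map_adj_iff (v := Sum.inl 0) (w := Sum.inr 1)).2 (by simp)
    simpa using this
  have hnab : ¬ G'.Adj a.1 b.1 := by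
    intro h
    have := (φ.symm.map_adj_iff (v := Sum.inr 0) (w := Sum.inr 1)).1 (by simpa using h)
    simp at this
  have hall : ∀ z, z ∈ G'.verts ↔ z = c.1 ∨ z = a.1 ∨ z = b.1 := by
    intro z
    constructor
    · intro hz
      have key : (⟨z, hz⟩ : G'.verts) = c ∨ (⟨z, hz⟩ : G'.verts) = a ∨
          (⟨z, hz⟩ : G'.verts) = b := by
        rcases hφ : φ ⟨z, hz⟩ with i | j
        · left
          have hi : i = 0 := Subsingleton.elim _ _
          rw [hc, ← hi, ← hφ, RelIso.symm_apply_apply]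
        · have h2 : j = 0 ∨ j = 1 := by omega
          rcases h2 with rfl | rfl
          · right; left
            rw [ha, ← hφ, RelIso.symm_apply_apply]
          · right; right
            rw [hb, ← hφ, RelIso.symm_apply_apply]
      rcases key with h | h | h
      · exact Or.inl (congrArg Subtype.val h)
      · exact Or.inr (Or.inl (congrArg Subtype.val h))
      · exact Or.inr (Or.inr (congrArg Subtype.val h))
    · rintro (rfl | rfl | rfl)
      · exact c.2
      · exact a.2
      · exact b.2
  refine ⟨c.1, {a.1, b.1}, ?_, ?_⟩
  · simp only [Finset.mem_powersetCard]
    refine ⟨?_, by rw [Finset.card_insert_of_notMem (by simpa using hab'),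
      Finset.card_singleton]⟩
    intro x hx
    simp only [Finset.mem_insert, Finset.mem_singleton] at hx
    rcases hx with rfl | rfl
    · simpa using G'.adj_sub hadj_ca
    · simpa using G'.adj_sub hadj_cb
  · ext x y
    · simp only [pathSub_verts, Finset.coe_insert, Finset.coe_singleton, Set.mem_insert_iff,
        Set.mem_singleton_iff, hall]
    · simp only [pathSub_adj, Finset.mem_insert, Finset.mem_singleton]
      constructor
      · intro h
        have hx := (hall x).1 (G'.edge_vert h)
        have hy := (hall y).1 (G'.edge_vert h.symm)
        have hGxy := G'.adj_sub h
        rcases hx with rfl | rfl | rfl <;> rcases hy with rfl | rfl | rfl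
        · exact absurd hGxy (G.irrefl)
        · exact Or.inl ⟨rfl, Or.inl rfl, hGxy⟩
        · exact Or.inl ⟨rfl, Or.inr rfl, hGxy⟩
        · exact Or.inr ⟨rfl, Or.inl rfl, hGxy⟩
        · exact absurd hGxy (G.irrefl)
        · exact absurd h hnab
        · exact Or.inr ⟨rfl, Or.inr rfl, hGxy⟩
        · exact absurd h (fun h => hnab h.symm)
        · exact absurd hGxy (G.irrefl)
      · rintro (⟨rfl, rfl | rfl, -⟩ | ⟨rfl, rfl | rfl, -⟩)
        · exact hadj_ca
        · exact hadj_cb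
        · exact hadj_ca.symm
        · exact hadj_cb.symm

lemma pathSub_v_not_mem [Fintype V] [DecidableRel G.Adj] {v : V} {e : Finset V}
    (he : e ∈ (G.neighborFinset v).powersetCard 2) : v ∉ e := by
  rw [Finset.mem_powersetCard] at he
  intro h
  have := he.1 h
  simp at this

lemma pathSub_adj_center [Fintype V] [DecidableRel G.Adj] {v : V} {e : Finset V}
    (he : e ∈ (G.neighborFinset v).powersetCard 2) (x : V) :
    (pathSub G v e).Adj v x ↔ x ∈ e := by
  rw [Finset.mem_powersetCard] at he
  simp only [pathSub_adj]
  constructor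
  · rintro (⟨-, h, -⟩ | ⟨rfl, h, -⟩) <;> first | exact h |
      exact absurd (he.1 h) (by simp)
  · intro h
    refine Or.inl ⟨trivial, h, ?_⟩
    simpa using he.1 h

lemma pathSub_injOn [Fintype V] [DecidableRel G.Adj] {v v' : V} {e e' : Finset V}
    (he : e ∈ (G.neighborFinset v).powersetCard 2)
    (he' : e' ∈ (G.neighborFinset v').powersetCard 2)
    (h : pathSub G v e = pathSub G v' e') : v = v' ∧ e = e' := by
  obtain ⟨a, b, hab, hee⟩ := Finset.card_eq_two.1 (Finset.mem_powersetCard.1 he).2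
  have hva : (pathSub G v e).Adj v a :=
    (pathSub_adj_center G he a).2 (hee ▸ Finset.mem_insert_self a {b})
  have hvb : (pathSub G v e).Adj v b :=
    (pathSub_adj_center G he b).2 (hee ▸ Finset.mem_insert_of_mem (Finset.mem_singleton_self b))
  have hvv : v = v' := by
    by_contra hne
    rw [h, pathSub_adj] at hva hvb
    rcases hva with ⟨h1, -⟩ | ⟨h1, -, -⟩
    · exact hne h1
    rcases hvb with ⟨h2, -⟩ | ⟨h2, -, -⟩
    · exact hne h2
    exact hab (h1.trans h2.symm)
  subst hvv
  refine ⟨rfl, ?_⟩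
  ext x
  rw [← pathSub_adj_center G he x, ← pathSub_adj_center G he' x, h]

lemma copies_path [Fintype V] [DecidableRel G.Adj] :
    G.copies (completeBipartiteGraph (Fin 1) (Fin 2)) = ∑ v, (G.degree v).choose 2 := by
  classical
  have hset : {G' : G.Subgraph | Nonempty (G'.coe ≃g completeBipartiteGraph (Fin 1) (Fin 2))}
      = ↑(((Finset.univ : Finset V).sigma
          (fun v => (G.neighborFinset v).powersetCard 2)).image
          (fun p => pathSub G p.1 p.2)) := by
    ext G'
    simp only [Set.mem_setOf_eq, Finset.coe_image, Set.mem_image, Finset.mem_coe,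
      Finset.mem_sigma, Finset.mem_univ, true_and]
    constructor
    · intro h
      obtain ⟨v, e, hve, rfl⟩ := iso_pathSub G G' h
      exact ⟨⟨v, e⟩, hve, rfl⟩
    · rintro ⟨⟨v, e⟩, hve, rfl⟩
      obtain ⟨a, b, hab, rfl⟩ := Finset.card_eq_two.1 (Finset.mem_powersetCard.1 hve).2
      have ha : G.Adj v a := by
        simpa using (Finset.mem_powersetCard.1 hve).1 (by simp : a ∈ ({a, b} : Finset V))
      have hb : G.Adj v b := by
        simpa using (Finset.mem_powersetCard.1 hve).1 (by simp : b ∈ ({a, b} : Finset V))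
      exact pathSub_iso G v a b hab ha hb
  rw [SimpleGraph.copies, hset, Set.ncard_coe_finset,
    Finset.card_image_of_injOn (fun p hp q hq hpq => by
      obtain ⟨h1, h2⟩ := pathSub_injOn G (Finset.mem_sigma.1 hp).2 (Finset.mem_sigma.1 hq).2 hpq
      exact Sigma.ext h1 (heq_of_eq h2)),
    Finset.card_sigma]
  congr 1
  ext v
  rw [Finset.card_powersetCard, SimpleGraph.card_neighborFinset_eq_degree]

lemma joinCompleteIndep_adj (k m : ℕ) (x y : Fin k ⊕ Fin m) :
    (joinCompleteIndep k m).Adj x y ↔ x ≠ y ∧ (x.isLeft ∨ y.isLeft) := by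
  simp [joinCompleteIndep, fromRel_adj]

instance (k m : ℕ) : DecidableRel (joinCompleteIndep k m).Adj := fun x y =>
  decidable_of_iff _ (joinCompleteIndep_adj k m x y).symm

lemma degree_inl (k m : ℕ) (i : Fin k) :
    (joinCompleteIndep k m).degree (Sum.inl i) = k + m - 1 := by
  have h : (joinCompleteIndep k m).neighborFinset (Sum.inl i)
      = Finset.univ.erase (Sum.inl i) := by
    ext x
    simp [mem_neighborFinset, joinCompleteIndep_adj, ne_comm]
  rw [← card_neighborFinset_eq_degree, h, Finset.card_erase_of_mem (Finset.mem_univ _),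
    Finset.card_univ, Fintype.card_sum, Fintype.card_fin, Fintype.card_fin]

lemma degree_inr (k m : ℕ) (j : Fin m) :
    (joinCompleteIndep k m).degree (Sum.inr j) = k := by
  have h : (joinCompleteIndep k m).neighborFinset (Sum.inr j)
      = Finset.univ.image (Sum.inl : Fin k → Fin k ⊕ Fin m) := by
    ext x
    cases x <;> simp [mem_neighborFinset, joinCompleteIndep_adj]
  rw [← card_neighborFinset_eq_degree, h,
    Finset.card_image_of_injective _ Sum.inl_injective, Finset.card_univ, Fintype.card_fin]

lemma no_Ks (k m s : ℕ) (hk : k + 2 = s) (hs : 4 ≤ s) :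
    ¬ (joinCompleteIndep k m).Contains (completeGraph (Fin s)) := by
  rintro ⟨f, hf⟩
  set L : Finset (Fin s) := Finset.univ.filter (fun i => (f i).isLeft) with hL
  have hLcard : L.card ≤ k := by
    have h1 : L.card = (L.image f).card := (Finset.card_image_of_injective _ hf).symm
    have h2 : L.image f ⊆ Finset.univ.image (Sum.inl : Fin k → Fin k ⊕ Fin m) := by
      intro x hx
      simp only [Finset.mem_image, hL, Finset.mem_filter, Finset.mem_univ, true_and] at hx
      obtain ⟨i, hi, rfl⟩ := hx
      obtain ⟨y, hy⟩ := Sum.isLeft_iff.1 hi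
      simp [hy]
    calc L.card = (L.image f).card := h1
      _ ≤ (Finset.univ.image (Sum.inl : Fin k → Fin k ⊕ Fin m)).card := Finset.card_le_card h2
      _ = k := by rw [Finset.card_image_of_injective _ Sum.inl_injective, Finset.card_univ,
            Fintype.card_fin]
  have hcompl : 1 < (Lᶜ).card := by
    have := Finset.card_compl L
    rw [Fintype.card_fin] at this
    omega
  obtain ⟨i, hi, j, hj, hij⟩ := Finset.one_lt_card.1 hcompl
  simp only [Finset.mem_compl, hL, Finset.mem_filter, Finset.mem_univ, true_and] at hi hj
  have hadj : (joinCompleteIndep k m).Adj (f i) (f j) := f.map_rel hij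
  rw [joinCompleteIndep_adj] at hadj
  rcases hadj.2 with h | h
  · exact hi (by simpa using h)
  · exact hj (by simpa using h)

lemma sat_edge (k m s : ℕ) (hk : k + 2 = s)
    (u v : Fin k ⊕ Fin m) (huv : u ≠ v) (hna : ¬ (joinCompleteIndep k m).Adj u v) :
    ((joinCompleteIndep k m) ⊔ SimpleGraph.fromEdgeSet {s(u, v)}).Contains
      (completeGraph (Fin s)) := by
  rw [joinCompleteIndep_adj] at hna
  push_neg at hna
  have hul : ¬ u.isLeft := fun h => by simp [huv, h] at hna
  have hvl : ¬ v.isLeft := fun h => by simp [huv, h] at hna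
  obtain ⟨a, rfl⟩ := Sum.isRight_iff.1 (by simpa [Sum.not_isLeft] using hul)
  obtain ⟨b, rfl⟩ := Sum.isRight_iff.1 (by simpa [Sum.not_isLeft] using hvl)
  set g : Fin k ⊕ Fin 2 → Fin k ⊕ Fin m :=
    Sum.elim Sum.inl (fun t => if t = 0 then Sum.inr a else Sum.inr b) with hg
  have hab : a ≠ b := fun h => huv (by rw [h])
  have hginj : Function.Injective g := by
    rintro (x | x) (y | y) h <;> simp only [hg, Sum.elim_inl, Sum.elim_inr] at h
    · rw [Sum.inl.injEq] at h; exact congrArg Sum.inl h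
    · exfalso; split_ifs at h <;> simp at h
    · exfalso; split_ifs at h <;> simp at h
    · congr 1
      split_ifs at h with h1 h2 h2 <;> rw [Sum.inr.injEq] at h
      · rw [h1, h2]
      · exact absurd h hab
      · exact absurd h.symm hab
      · fin_cases x <;> fin_cases y <;> simp_all
  have hghom : ∀ x y : Fin k ⊕ Fin 2, x ≠ y →
      ((joinCompleteIndep k m) ⊔ SimpleGraph.fromEdgeSet {s(Sum.inr a, Sum.inr b)}).Adj
        (g x) (g y) := by
    intro x y hxy
    have hne : g x ≠ g y := fun h => hxy (hginj h)
    rcases x with x | x <;> rcases y with y | y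
    · exact Or.inl ((joinCompleteIndep_adj k m _ _).2 ⟨hne, Or.inl rfl⟩)
    · exact Or.inl ((joinCompleteIndep_adj k m _ _).2 ⟨hne, Or.inl rfl⟩)
    · exact Or.inl ((joinCompleteIndep_adj k m _ _).2 ⟨hne, Or.inr rfl⟩)
    · refine Or.inr ?_
      rw [fromEdgeSet_adj]
      refine ⟨?_, hne⟩
      have hxy2 : (x = 0 ∧ y = 1) ∨ (x = 1 ∧ y = 0) := by
        fin_cases x <;> fin_cases y <;> simp_all
      rcases hxy2 with ⟨rfl, rfl⟩ | ⟨rfl, rfl⟩ <;> simp [hg, Sym2.eq_swap]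
  let e : Fin k ⊕ Fin 2 ≃ Fin s := finSumFinEquiv.trans (finCongr hk)
  refine ⟨SimpleGraph.Hom.comp ⟨g, fun {x y} h => hghom x y h⟩
      (SimpleGraph.Iso.completeGraph e.symm).toHom, ?_⟩
  exact hginj.comp (SimpleGraph.Iso.completeGraph e.symm).toEmbedding.injective

end Aux

/-- For all `n ≥ s ≥ 4`, the join of `K_{s−2}` with an independent set on
`n−s+2` vertices is a `K_s`-saturated graph on `n` vertices containing exactly
`(s−2)·C(n−1,2) + (n−s+2)·C(s−2,2)` copies of `K_{1,2}`. -/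
theorem stmt_4 (n s : ℕ) (hs : 4 ≤ s) (hn : s ≤ n) :
    Fintype.card (Fin (s - 2) ⊕ Fin (n - s + 2)) = n ∧
    (joinCompleteIndep (s - 2) (n - s + 2)).Saturated (completeGraph (Fin s)) ∧
    (joinCompleteIndep (s - 2) (n - s + 2)).copies (completeBipartiteGraph (Fin 1) (Fin 2)) =
      (s - 2) * (n - 1).choose 2 + (n - s + 2) * (s - 2).choose 2 := by
  constructor
  · simp only [Fintype.card_sum, Fintype.card_fin]
    omega
  constructor
  · exact ⟨no_Ks (s - 2) (n - s + 2) s (by omega) hs,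
      fun u v h1 h2 => sat_edge (s - 2) (n - s + 2) s (by omega) u v h1 h2⟩
  · rw [copies_path]
    rw [Fintype.sum_sum_type]
    simp only [degree_inl, degree_inr, Finset.sum_const, Finset.card_univ, Fintype.card_fin,
      smul_eq_mul]
    have h1 : s - 2 + (n - s + 2) - 1 = n - 1 := by omega
    rw [h1]
end

section
/- Let F be a connected bipartite graph with parts of sizes a and b. For any graph G on n vertices, the number of copies of K_{a,b} in G is at most the number of copies of F in G. -/
open SimpleGraph

section aux
variable {a b : ℕ} {V : Type*} {G : SimpleGraph V} {F : SimpleGraph (Fin a ⊕ Fin b)}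

/-- Pull back `F` along an isomorphism from a `K_{a,b}`-copy. -/
def pb (hbip : F ≤ completeBipartiteGraph (Fin a) (Fin b)) (G' : G.Subgraph)
    (φ : G'.coe ≃g completeBipartiteGraph (Fin a) (Fin b)) : G.Subgraph where
  verts := G'.verts
  Adj x y := ∃ (hx : x ∈ G'.verts) (hy : y ∈ G'.verts), F.Adj (φ ⟨x, hx⟩) (φ ⟨y, hy⟩)
  adj_sub := by
    rintro x y ⟨hx, hy, h⟩
    have h2 : G'.coe.Adj ⟨x, hx⟩ ⟨y, hy⟩ := φ.map_rel_iff.mp (hbip h)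
    exact G'.adj_sub h2
  edge_vert := by rintro x y ⟨hx, hy, h⟩; exact hx
  symm := by constructor; rintro x y ⟨hx, hy, h⟩; exact ⟨hy, hx, h.symm⟩

def pbIso (hbip : F ≤ completeBipartiteGraph (Fin a) (Fin b)) (G' : G.Subgraph)
    (φ : G'.coe ≃g completeBipartiteGraph (Fin a) (Fin b)) : (pb hbip G' φ).coe ≃g F where
  toEquiv := φ.toEquiv
  map_rel_iff' := by
    intro u v
    show F.Adj (φ u) (φ v) ↔ (pb hbip G' φ).Adj u.1 v.1
    constructor
    · intro h; exact ⟨u.2, v.2, h⟩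
    · rintro ⟨hx, hy, h⟩; exact h

end aux

lemma boolAux : ∀ x1 x2 x3 y1 y2 y3 : Bool, x1 ≠ x2 → y1 ≠ y2 →
    (x2 = x3 ↔ y2 = y3) → (x1 = x3 ↔ y1 = y3) := by decide

lemma walk_parity {W : Type*} {Γ : SimpleGraph W} (c₁ c₂ : W → Bool)
    (h1 : ∀ u v, Γ.Adj u v → c₁ u ≠ c₁ v) (h2 : ∀ u v, Γ.Adj u v → c₂ u ≠ c₂ v)
    {u v : W} (p : Γ.Walk u v) : (c₁ u = c₁ v ↔ c₂ u = c₂ v) := by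
  induction p with
  | nil => simp
  | cons h p ih => exact boolAux _ _ _ _ _ _ (h1 _ _ h) (h2 _ _ h) ih

lemma adj_iff' {a b : ℕ} {V : Type*} {G : SimpleGraph V} (G' : G.Subgraph)
    (φ : G'.coe ≃g completeBipartiteGraph (Fin a) (Fin b)) (x y : V) :
    G'.Adj x y ↔ ∃ (hx : x ∈ G'.verts) (hy : y ∈ G'.verts),
      (φ ⟨x, hx⟩).isLeft ≠ (φ ⟨y, hy⟩).isLeft := by
  constructor
  · intro h
    have hx := G'.edge_vert h
    have hy := G'.edge_vert h.symm
    refine ⟨hx, hy, ?_⟩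
    have h2 : G'.coe.Adj ⟨x, hx⟩ ⟨y, hy⟩ := by rw [Subgraph.coe_adj]; exact h
    have h3 := φ.map_rel_iff.mpr h2
    rcases hu : φ ⟨x, hx⟩ with p | p <;> rcases hv : φ ⟨y, hy⟩ with q | q <;>
      simp_all [completeBipartiteGraph]
  · rintro ⟨hx, hy, h⟩
    have h3 : (completeBipartiteGraph (Fin a) (Fin b)).Adj (φ ⟨x, hx⟩) (φ ⟨y, hy⟩) := by
      rcases hu : φ ⟨x, hx⟩ with p | p <;> rcases hv : φ ⟨y, hy⟩ with q | q <;>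
        simp_all [completeBipartiteGraph]
    have h2 := φ.map_rel_iff.mp h3
    rw [Subgraph.coe_adj] at h2
    exact h2

lemma kadj_isLeft {a b : ℕ} {s t : Fin a ⊕ Fin b} :
    (completeBipartiteGraph (Fin a) (Fin b)).Adj s t ↔ s.isLeft ≠ t.isLeft := by
  cases s <;> cases t <;> simp [completeBipartiteGraph]

theorem stmt_12' (a b : ℕ) (F : SimpleGraph (Fin a ⊕ Fin b))
    (hbip : F ≤ completeBipartiteGraph (Fin a) (Fin b)) (hconn : F.Connected)
    (n : ℕ) (V : Type*) [Fintype V] (hV : Fintype.card V = n) (G : SimpleGraph V) :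
    ({G' : G.Subgraph | Nonempty (G'.coe ≃g completeBipartiteGraph (Fin a) (Fin b))}).ncard ≤
      ({G' : G.Subgraph | Nonempty (G'.coe ≃g F)}).ncard := by
  classical
  have hfin : Finite G.Subgraph := by
    apply Finite.of_injective (fun H : G.Subgraph => (H.verts, H.Adj))
    rintro H1 H2 h
    simp only [Prod.mk.injEq] at h
    exact Subgraph.ext h.1 h.2
  apply Set.ncard_le_ncard_of_injOn
    (fun G' => if h : Nonempty (G'.coe ≃g completeBipartiteGraph (Fin a) (Fin b))
      then pb hbip G' h.some else G')
  · intro G' hG'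
    simp only [Set.mem_setOf_eq] at hG' ⊢
    rw [dif_pos hG']
    exact ⟨pbIso hbip G' hG'.some⟩
  · intro G1 h1 G2 h2 heq
    simp only [Set.mem_setOf_eq] at h1 h2 heq
    rw [dif_pos h1, dif_pos h2] at heq
    set φ1 := h1.some with hφ1
    set φ2 := h2.some with hφ2
    have hverts' := congrArg Subgraph.verts heq
    have hverts : G1.verts = G2.verts := hverts'
    set c1 : V → Bool := fun x => if hx : x ∈ G1.verts then (φ1 ⟨x, hx⟩).isLeft else false
      with hc1
    set c2 : V → Bool := fun x => if hx : x ∈ G2.verts then (φ2 ⟨x, hx⟩).isLeft else false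
      with hc2
    have step1 : ∀ u v : (pb hbip G1 φ1).verts, (pb hbip G1 φ1).coe.Adj u v →
        c1 u.1 ≠ c1 v.1 := by
      rintro u v huv
      rw [Subgraph.coe_adj] at huv
      obtain ⟨hx, hy, h⟩ := huv
      have := kadj_isLeft.mp (hbip h)
      rw [hc1]
      simpa [dif_pos hx, dif_pos hy] using this
    have step2 : ∀ u v : (pb hbip G1 φ1).verts, (pb hbip G1 φ1).coe.Adj u v →
        c2 u.1 ≠ c2 v.1 := by
      rintro ⟨x, hx'⟩ ⟨y, hy'⟩ huv
      rw [Subgraph.coe_adj] at huv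
      have huv' : (pb hbip G1 φ1).Adj x y := huv
      rw [heq] at huv'
      show c2 x ≠ c2 y
      obtain ⟨hx, hy, h⟩ := huv'
      have := kadj_isLeft.mp (hbip h)
      rw [hc2]
      simpa [dif_pos hx, dif_pos hy] using this
    have key : ∀ x, ∀ hx : x ∈ G1.verts, ∀ y, ∀ hy : y ∈ G1.verts,
        (c1 x = c1 y ↔ c2 x = c2 y) := by
      intro x hx y hy
      have hreach : (pb hbip G1 φ1).coe.Reachable ⟨x, hx⟩ ⟨y, hy⟩ := by
        have := hconn.preconnected (pbIso hbip G1 φ1 ⟨x, hx⟩) (pbIso hbip G1 φ1 ⟨y, hy⟩)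
        exact Iso.reachable_iff.mp this
      obtain ⟨p⟩ := hreach
      exact walk_parity (fun u => c1 u.1) (fun u => c2 u.1) step1 step2 p
    apply Subgraph.ext hverts
    ext x y
    rw [adj_iff' G1 φ1, adj_iff' G2 φ2]
    constructor
    · rintro ⟨hx, hy, h⟩
      have hx2 : x ∈ G2.verts := hverts ▸ hx
      have hy2 : y ∈ G2.verts := hverts ▸ hy
      refine ⟨hx2, hy2, ?_⟩
      have hd : c1 x ≠ c1 y := by rw [hc1]; simpa [dif_pos hx, dif_pos hy] using h
      have hd2 : c2 x ≠ c2 y := fun hh => hd ((key x hx y hy).mpr hh)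
      rw [hc2] at hd2
      simpa [dif_pos hx2, dif_pos hy2] using hd2
    · rintro ⟨hx2, hy2, h⟩
      have hx : x ∈ G1.verts := hverts ▸ hx2
      have hy : y ∈ G1.verts := hverts ▸ hy2
      refine ⟨hx, hy, ?_⟩
      have hd2 : c2 x ≠ c2 y := by rw [hc2]; simpa [dif_pos hx2, dif_pos hy2] using h
      have hd : c1 x ≠ c1 y := fun hh => hd2 ((key x hx y hy).mp hh)
      rw [hc1] at hd
      simpa [dif_pos hx, dif_pos hy] using hd

/-- Let `F` be a connected bipartite graph with parts of sizes `a` and `b`.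
For any graph `G` on `n` vertices, the number of copies of `K_{a,b}` in `G` is at most the
number of copies of `F` in `G`. -/
theorem stmt_12 (a b : ℕ) (F : SimpleGraph (Fin a ⊕ Fin b))
    (hbip : F ≤ completeBipartiteGraph (Fin a) (Fin b)) (hconn : F.Connected)
    (n : ℕ) (V : Type*) [Fintype V] (hV : Fintype.card V = n) (G : SimpleGraph V) :
    G.copies (completeBipartiteGraph (Fin a) (Fin b)) ≤ G.copies F := by
  unfold SimpleGraph.copies
  exact stmt_12' a b F hbip hconn n V hV G
end

section
/- Let s ≥ 4 be an integer and let G be a K_s-saturated graph on n vertices. Then Σ_{xy ∈ E(G)} C(|N(x) ∩ N(y)|, 2) ≥ C(s−2,2) · (C(n,2) − e(G)), where the sum is over the edges xy of G, N(x) ∩ N(y) is the set of common neighbors of x and y, and e(G) is the number of edges of G. -/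
open SimpleGraph

open Finset in
lemma card_sym2_nondiag {V : Type*} [DecidableEq V] (A : Finset V) :
    (A.sym2.filter (fun p => ¬ p.IsDiag)).card = A.card.choose 2 := by
  classical
  have h1 : (A.sym2.filter (fun p => Sym2.IsDiag p)).card = A.card := by
    symm
    apply Finset.card_bij (fun a _ => s(a, a))
    · intro a ha
      simp [Finset.mk_mem_sym2_iff, ha]
    · intro a _ b _ h
      simpa using h
    · rintro ⟨x, y⟩ hp
      simp only [mem_filter, Finset.mem_sym2_iff] at hp
      obtain rfl : x = y := Sym2.mk_isDiag_iff.mp hp.2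
      exact ⟨x, hp.1 _ (by simp), rfl⟩
  have h2 := Finset.card_filter_add_card_filter_not
    (s := A.sym2) (p := fun p => Sym2.IsDiag p)
  rw [Finset.card_sym2] at h2
  have h3 : A.card + 1 ≥ 1 := by omega
  have hc : (A.card + 1).choose 2 = A.card + A.card.choose 2 := by
    rw [Nat.choose_succ_succ]
    simp [Nat.choose_one_right]
  omega

lemma sat_clique {V : Type*} [Fintype V] [DecidableEq V] (s : ℕ)
    (G : SimpleGraph V) (hG : G.Saturated (completeGraph (Fin s)))
    {u v : V} (huv : u ≠ v) (hadj : ¬ G.Adj u v) :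
    ∃ T : Finset V, T.card = s - 2 ∧ (∀ x ∈ T, x ∈ G.commonNeighbors u v) ∧
      (∀ x ∈ T, ∀ y ∈ T, x ≠ y → G.Adj x y) := by
  classical
  obtain ⟨f, hf⟩ := hG.2 u v huv hadj
  -- adjacency in the augmented graph
  have hadj' : ∀ a b : Fin s, a ≠ b →
      G.Adj (f a) (f b) ∨ s(f a, f b) = s(u, v) := by
    intro a b hab
    have := f.map_adj (show (completeGraph (Fin s)).Adj a b by simpa [completeGraph, top_adj] using hab)
    rw [sup_adj] at this
    rcases this with h | h
    · exact Or.inl h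
    · rw [fromEdgeSet_adj] at h
      exact Or.inr (by simpa using h.1)
  -- u is in the range of f
  have hu : ∃ i, f i = u := by
    by_contra hcon
    push_neg at hcon
    refine hG.1 ⟨⟨f, ?_⟩, hf⟩
    intro a b hab
    simp only [completeGraph, top_adj] at hab
    rcases hadj' a b hab with h | h
    · exact h
    · rw [Sym2.eq_iff] at h
      rcases h with ⟨h1, _⟩ | ⟨_, h2⟩
      · exact absurd h1 (hcon a)
      · exact absurd h2 (hcon b)
  have hv : ∃ j, f j = v := by
    by_contra hcon
    push_neg at hcon
    refine hG.1 ⟨⟨f, ?_⟩, hf⟩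
    intro a b hab
    simp only [completeGraph, top_adj] at hab
    rcases hadj' a b hab with h | h
    · exact h
    · rw [Sym2.eq_iff] at h
      rcases h with ⟨_, h1⟩ | ⟨h2, _⟩
      · exact absurd h1 (hcon b)
      · exact absurd h2 (hcon a)
  obtain ⟨i, hi⟩ := hu
  obtain ⟨j, hj⟩ := hv
  have hij : i ≠ j := fun h => huv (by rw [← hi, h, hj])
  refine ⟨((Finset.univ.erase j).erase i).image f, ?_, ?_, ?_⟩
  · rw [Finset.card_image_of_injective _ hf, Finset.card_erase_of_mem
      (Finset.mem_erase.mpr ⟨hij, Finset.mem_univ i⟩), Finset.card_erase_of_mem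
      (Finset.mem_univ j), Finset.card_univ, Fintype.card_fin]
    omega
  · rintro x hx
    obtain ⟨k, hk, rfl⟩ := Finset.mem_image.mp hx
    rw [Finset.mem_erase, Finset.mem_erase] at hk
    obtain ⟨hki, hkj, -⟩ := hk
    have hu' : G.Adj (f k) u := by
      rcases hadj' k i (by exact hki) with h | h
      · rwa [hi] at h
      · rw [hi, Sym2.eq_iff] at h
        rcases h with ⟨-, h⟩ | ⟨h, -⟩
        · exact absurd h huv
        · exact absurd (hf (h.trans hj.symm)) hkj
    have hv' : G.Adj (f k) v := by
      rcases hadj' k j (by exact hkj) with h | h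
      · rwa [hj] at h
      · rw [hj, Sym2.eq_iff] at h
        rcases h with ⟨h, -⟩ | ⟨-, h⟩
        · exact absurd (hf (h.trans hi.symm)) hki
        · exact absurd h.symm huv
    exact ⟨hu'.symm, hv'.symm⟩
  · rintro x hx y hy hxy
    obtain ⟨k, hk, rfl⟩ := Finset.mem_image.mp hx
    obtain ⟨l, hl, rfl⟩ := Finset.mem_image.mp hy
    rw [Finset.mem_erase, Finset.mem_erase] at hk hl
    have hkl : k ≠ l := fun h => hxy (by rw [h])
    rcases hadj' k l hkl with h | h
    · exact h
    · rw [Sym2.eq_iff] at h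
      rcases h with ⟨h1, -⟩ | ⟨-, h2⟩
      · exact absurd (hf (h1.trans hi.symm)) hk.1
      · exact absurd (hf (h2.trans hi.symm)) hl.1


/-- Let `s ≥ 4` and let `G` be a `K_s`-saturated graph on `n` vertices. Then
`Σ_{xy ∈ E(G)} C(|N(x) ∩ N(y)|, 2) ≥ C(s−2,2) · (C(n,2) − e(G))`. -/
theorem stmt_16 (s : ℕ) (hs : 4 ≤ s) (n : ℕ) (V : Type*) [Fintype V] [DecidableEq V]
    (hV : Fintype.card V = n) (G : SimpleGraph V) [DecidableRel G.Adj]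
    (hG : G.Saturated (completeGraph (Fin s))) :
    (s - 2).choose 2 * (n.choose 2 - G.edgeFinset.card) ≤
      ∑ e ∈ G.edgeFinset,
        Sym2.lift ⟨fun x y => ((G.commonNeighbors x y).ncard).choose 2,
          fun x y => by simp only [SimpleGraph.commonNeighbors_symm]⟩ e := by
  classical
  set r : Sym2 V → Sym2 V → Prop := fun e p => ∀ a ∈ p, ∀ b ∈ e, G.Adj b a with hr
  -- the number of non-edges
  have hcard : G.edgeFinset.card + Gᶜ.edgeFinset.card = n.choose 2 := by
    have h1 : G.edgeFinset ∪ Gᶜ.edgeFinset = (⊤ : SimpleGraph V).edgeFinset := by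
      apply Finset.coe_injective
      simp only [Finset.coe_union, SimpleGraph.coe_edgeFinset,
        ← SimpleGraph.edgeSet_sup, sup_compl_eq_top]
    rw [← Finset.card_union_of_disjoint
        (SimpleGraph.disjoint_edgeFinset.mpr disjoint_compl_right), h1,
      SimpleGraph.card_edgeFinset_top_eq_card_choose_two, hV]
  -- lower bound for each non-edge
  have hlow : ∀ p ∈ Gᶜ.edgeFinset,
      (s - 2).choose 2 ≤ (G.edgeFinset.filter (fun e => r e p)).card := by
    intro p
    induction p using Sym2.ind with | _ u v => ?_
    intro hp
    rw [SimpleGraph.mem_edgeFinset, SimpleGraph.mem_edgeSet, SimpleGraph.compl_adj] at hp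
    obtain ⟨T, hTcard, hTmem, hTcl⟩ := sat_clique s G hG hp.1 hp.2
    calc (s - 2).choose 2 = (T.sym2.filter (fun q => ¬ q.IsDiag)).card := by
          rw [card_sym2_nondiag, hTcard]
      _ ≤ _ := by
          apply Finset.card_le_card
          intro q hq
          obtain ⟨x, y⟩ := q
          rw [Finset.mem_filter, Finset.mk_mem_sym2_iff, Sym2.mk_isDiag_iff] at hq
          obtain ⟨⟨hx, hy⟩, hxy⟩ := hq
          rw [Finset.mem_filter, SimpleGraph.mem_edgeFinset, SimpleGraph.mem_edgeSet]
          refine ⟨hTcl x hx y hy hxy, ?_⟩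
          intro a ha b hb
          rw [Sym2.mem_iff] at ha hb
          have hbc : b ∈ G.commonNeighbors u v := by
            rcases hb with rfl | rfl
            · exact hTmem _ hx
            · exact hTmem _ hy
          rcases ha with rfl | rfl
          · exact hbc.1.symm
          · exact hbc.2.symm
  -- upper bound for each edge
  have hup : ∀ e ∈ G.edgeFinset,
      (Gᶜ.edgeFinset.filter (fun p => r e p)).card ≤
        Sym2.lift ⟨fun x y => ((G.commonNeighbors x y).ncard).choose 2,
          fun x y => by simp only [SimpleGraph.commonNeighbors_symm]⟩ e := by
    intro e
    induction e using Sym2.ind with | _ x y => ?_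
    intro _
    simp only [Sym2.lift_mk]
    have hA : (G.commonNeighbors x y).ncard = (G.commonNeighbors x y).toFinset.card :=
      Set.ncard_eq_toFinset_card' _
    rw [hA, ← card_sym2_nondiag]
    apply Finset.card_le_card
    intro p hp
    rw [Finset.mem_filter] at hp
    obtain ⟨hp1, hp2⟩ := hp
    rw [Finset.mem_filter, Finset.mem_sym2_iff]
    refine ⟨fun a ha => ?_, ?_⟩
    · rw [Set.mem_toFinset]
      exact ⟨hp2 a ha x (by simp), hp2 a ha y (by simp)⟩
    · rw [SimpleGraph.mem_edgeFinset] at hp1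
      exact SimpleGraph.not_isDiag_of_mem_edgeSet _ hp1
  -- double counting
  have hswap : ∑ p ∈ Gᶜ.edgeFinset, (G.edgeFinset.filter (fun e => r e p)).card =
      ∑ e ∈ G.edgeFinset, (Gᶜ.edgeFinset.filter (fun p => r e p)).card := by
    simp_rw [Finset.card_filter]
    exact Finset.sum_comm
  have hne : n.choose 2 - G.edgeFinset.card = Gᶜ.edgeFinset.card := by omega
  calc (s - 2).choose 2 * (n.choose 2 - G.edgeFinset.card)
      = ∑ _p ∈ Gᶜ.edgeFinset, (s - 2).choose 2 := by
        rw [Finset.sum_const, hne, smul_eq_mul, mul_comm]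
    _ ≤ ∑ p ∈ Gᶜ.edgeFinset, (G.edgeFinset.filter (fun e => r e p)).card :=
        Finset.sum_le_sum hlow
    _ = ∑ e ∈ G.edgeFinset, (Gᶜ.edgeFinset.filter (fun p => r e p)).card := hswap
    _ ≤ _ := Finset.sum_le_sum hup
end
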